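/- Let K be a field of characteristic 0, m = x_1^{α_1}⋯x_n^{α_n} with all α_i ≥ 1, f ∈ K[x_1,...,x_n] homogeneous of degree d = α_1+⋯+α_n, and A ∈ GL_n(K). Then m(A x) = c·f(x) for some nonzero constant c if and only if g_f = A⁻¹ g_m A, where g_P denotes the Lie algebra {B : Σ_{i,j} b_{ij} x_j ∂P/∂x_i = 0}. -/

import Mathlib

open MvPolynomial Matrix

set_option linter.unusedSectionVars false
set_option maxHeartbeats 1000000

section Aux

variable {n : ℕ} {K : Type*} [Field K] [CharZero K]

private noncomputable def lmap (A : Matrix (Fin n) (Fin n) K) : Fin n → MvPolynomial (Fin n) K :=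
  fun i => ∑ j, A i j • X j

private noncomputable def Dop (B : Matrix (Fin n) (Fin n) K) (P : MvPolynomial (Fin n) K) :
    MvPolynomial (Fin n) K :=
  ∑ i, ∑ j, C (B i j) * (X j * pderiv i P)

private lemma Dop_add (B : Matrix (Fin n) (Fin n) K) (P Q : MvPolynomial (Fin n) K) :
    Dop B (P + Q) = Dop B P + Dop B Q := by
  simp [Dop, map_add, mul_add, Finset.sum_add_distrib]

private lemma Dop_C_mul (B : Matrix (Fin n) (Fin n) K) (c : K) (P : MvPolynomial (Fin n) K) :
    Dop B (C c * P) = C c * Dop B P := by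
  simp only [Dop, Finset.mul_sum]
  refine Finset.sum_congr rfl fun i _ => Finset.sum_congr rfl fun j _ => ?_
  rw [pderiv_mul, pderiv_C]
  ring

private lemma Dop_smul (B : Matrix (Fin n) (Fin n) K) (c : K) (P : MvPolynomial (Fin n) K) :
    Dop B (c • P) = c • Dop B P := by
  rw [smul_eq_C_mul, smul_eq_C_mul, Dop_C_mul]

private lemma Dop_mul (B : Matrix (Fin n) (Fin n) K) (P Q : MvPolynomial (Fin n) K) :
    Dop B (P * Q) = P * Dop B Q + Q * Dop B P := by
  simp only [Dop, Finset.mul_sum, ← Finset.sum_add_distrib]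
  refine Finset.sum_congr rfl fun i _ => Finset.sum_congr rfl fun j _ => ?_
  rw [pderiv_mul]
  ring

private lemma Dop_sum {ι : Type*} (B : Matrix (Fin n) (Fin n) K) (s : Finset ι)
    (f : ι → MvPolynomial (Fin n) K) :
    Dop B (∑ x ∈ s, f x) = ∑ x ∈ s, Dop B (f x) := by
  classical
  induction s using Finset.induction with
  | empty => simp [Dop]
  | insert _ _ h ih => rw [Finset.sum_insert h, Finset.sum_insert h, Dop_add, ih]

private lemma Dop_X (B : Matrix (Fin n) (Fin n) K) (l : Fin n) :
    Dop B (X l) = ∑ j, C (B l j) * X j := by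
  classical
  simp [Dop, pderiv_X, Pi.single_apply, mul_ite, ite_mul, Finset.sum_ite_eq]

private lemma Dop_lmap (A B : Matrix (Fin n) (Fin n) K) (i : Fin n) :
    Dop B (lmap A i) = ∑ j, C ((A * B) i j) * X j := by
  rw [lmap, Dop_sum]
  simp only [smul_eq_C_mul, Dop_C_mul, Dop_X, Finset.mul_sum, ← mul_assoc, ← C_mul]
  rw [Finset.sum_comm]
  refine Finset.sum_congr rfl fun j _ => ?_
  rw [← Finset.sum_mul, ← map_sum, Matrix.mul_apply]

private lemma aeval_lmap_lin (A B : Matrix (Fin n) (Fin n) K) (i : Fin n) :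
    aeval (lmap A) (∑ j, C (B i j) * X j) = ∑ l, C ((B * A) i l) * X l := by
  simp only [map_sum, _root_.map_mul, aeval_C, aeval_X, MvPolynomial.algebraMap_eq]
  simp only [lmap, Finset.mul_sum, smul_eq_C_mul, ← mul_assoc, ← C_mul]
  rw [Finset.sum_comm]
  refine Finset.sum_congr rfl fun l _ => ?_
  rw [← Finset.sum_mul, ← map_sum, Matrix.mul_apply]

private lemma Dop_aeval (A B C' : Matrix (Fin n) (Fin n) K) (hABC : A * B = C' * A)
    (P : MvPolynomial (Fin n) K) :
    Dop B (aeval (lmap A) P) = aeval (lmap A) (Dop C' P) := by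
  induction P using MvPolynomial.induction_on with
  | C c =>
      rw [aeval_C, MvPolynomial.algebraMap_eq]
      rw [show (Dop C' (C c : MvPolynomial (Fin n) K)) = 0 by simp [Dop, pderiv_C]]
      rw [show (Dop B (C c : MvPolynomial (Fin n) K)) = 0 by simp [Dop, pderiv_C]]
      rw [map_zero]
  | add p q hp hq => rw [map_add, Dop_add, hp, hq, Dop_add, map_add]
  | mul_X p i hp =>
      rw [_root_.map_mul, Dop_mul, aeval_X, Dop_mul, map_add, _root_.map_mul, _root_.map_mul,
        aeval_X, hp, Dop_lmap, hABC, ← aeval_lmap_lin A C' i, Dop_X]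

private lemma lmap_comp (A A' : Matrix (Fin n) (Fin n) K) (P : MvPolynomial (Fin n) K) :
    aeval (lmap A) (aeval (lmap A') P) = aeval (lmap (A' * A)) P := by
  rw [comp_aeval_apply]
  have h : (fun i => aeval (lmap A) (lmap A' i)) = lmap (A' * A) := by
    funext i
    simp only [lmap, map_sum, _root_.map_smul, aeval_X, Finset.smul_sum, smul_smul]
    rw [Finset.sum_comm]
    refine Finset.sum_congr rfl fun l _ => ?_
    rw [← Finset.sum_smul, Matrix.mul_apply]
  rw [h]

private lemma lmap_one : (lmap (1 : Matrix (Fin n) (Fin n) K)) = X := by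
  funext i
  simp [lmap, Matrix.one_apply, ite_smul, Finset.sum_ite_eq]

private lemma prod_X_pow_eq (α : Fin n → ℕ) (hα : ∀ i, 1 ≤ α i) :
    (∏ k, X k ^ α k : MvPolynomial (Fin n) K)
      = monomial (Finsupp.equivFunOnFinite.symm α) 1 := by
  rw [← prod_X_pow_eq_monomial]
  rw [show (Finsupp.equivFunOnFinite.symm α).support = Finset.univ by
    ext k
    simp only [Finsupp.mem_support_iff, Finset.mem_univ, iff_true,
      Finsupp.coe_equivFunOnFinite_symm]
    exact Nat.one_le_iff_ne_zero.mp (hα k)]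
  exact Finset.prod_congr rfl fun k _ => by simp

private lemma X_mul_pderiv_monomial (i : Fin n) (s : Fin n →₀ ℕ) (a : K) :
    X i * pderiv i (monomial s a) = monomial s (a * s i) := by
  rw [pderiv_monomial]
  by_cases h : s i = 0
  · simp [h]
  · rw [show (X i : MvPolynomial (Fin n) K) = monomial (Finsupp.single i 1) 1 from rfl,
      monomial_mul, one_mul]
    have hs : Finsupp.single i 1 + (s - Finsupp.single i 1) = s := by
      ext k
      rw [Finsupp.add_apply, Finsupp.tsub_apply, Finsupp.single_apply]
      by_cases hk : i = k
      · subst hk; rw [if_pos rfl]; omega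
      · rw [if_neg hk]; omega
    rw [hs]

private lemma coeff_X_mul_pderiv (i : Fin n) (β : Fin n →₀ ℕ) (p : MvPolynomial (Fin n) K) :
    coeff β (X i * pderiv i p) = (β i : K) * coeff β p := by
  induction p using MvPolynomial.induction_on' with
  | monomial s a =>
      rw [_root_.X_mul_pderiv_monomial]
      simp only [coeff_monomial]
      split_ifs with h
      · subst h; ring
      · ring
  | add p q hp hq =>
      rw [map_add, mul_add, coeff_add, coeff_add, hp, hq, mul_add]

private lemma Dop_diagonal (δ : Fin n → K) (P : MvPolynomial (Fin n) K) :
    Dop (diagonal δ) P = ∑ i, C (δ i) * (X i * pderiv i P) := by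
  unfold Dop
  refine Finset.sum_congr rfl fun i _ => ?_
  rw [Finset.sum_eq_single i (fun j _ hj => by
    rw [Matrix.diagonal_apply_ne' δ hj, map_zero, zero_mul]) (fun h => absurd (Finset.mem_univ i) h)]
  rw [Matrix.diagonal_apply_eq]

private lemma Dop_diagonal_monomial (δ : Fin n → K) (s : Fin n →₀ ℕ) (a : K) :
    Dop (diagonal δ) (monomial s a) = C (∑ i, δ i * s i) * monomial s a := by
  rw [Dop_diagonal]
  simp only [_root_.X_mul_pderiv_monomial]
  rw [C_mul_monomial]
  rw [Finset.sum_mul]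
  rw [show ∀ g : Fin n → K, ((monomial s) (∑ i, g i) : MvPolynomial (Fin n) K)
      = ∑ i, monomial s (g i) from fun g => map_sum (monomial s) g Finset.univ]
  refine Finset.sum_congr rfl fun i _ => ?_
  rw [C_mul_monomial]
  ring_nf

end Aux

-- STATEMENT 13: for a monomial `m = x_1^{α_1}⋯x_n^{α_n}` with all `α_i ≥ 1`, a nonzero
-- homogeneous `f` of degree `d = Σ α_i`, and invertible `A`: `m(Ax) = c·f(x)` for some
-- nonzero constant `c` iff `g_f = A⁻¹ g_m A`.
theorem orbit_of_monomial_iff_conjugate_lie_algebras {n : ℕ} {K : Type*} [Field K] [CharZero K]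
    (α : Fin n → ℕ) (hα : ∀ i, 1 ≤ α i) (f : MvPolynomial (Fin n) K) (hf : f ≠ 0)
    (hhom : f.IsHomogeneous (∑ i, α i)) (A : GL (Fin n) K) :
    (∃ c : K, c ≠ 0 ∧
        aeval (R := K)
          (fun i => ∑ j, (A : Matrix (Fin n) (Fin n) K) i j • (X j : MvPolynomial (Fin n) K))
          (∏ k, X k ^ α k) = C c * f) ↔
      {B : Matrix (Fin n) (Fin n) K | ∑ i, ∑ j, C (B i j) * (X j * pderiv i f) = 0} =
        (fun B => (↑A⁻¹ : Matrix (Fin n) (Fin n) K) * B * (A : Matrix (Fin n) (Fin n) K)) ''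
          {B : Matrix (Fin n) (Fin n) K |
            ∑ i, ∑ j, C (B i j) * (X j * pderiv i (∏ k, X k ^ α k)) = 0} := by
  classical
  have hA1 : (A : Matrix (Fin n) (Fin n) K) * (↑A⁻¹ : Matrix (Fin n) (Fin n) K) = 1 :=
    A.mul_inv
  have hA2 : (↑A⁻¹ : Matrix (Fin n) (Fin n) K) * (A : Matrix (Fin n) (Fin n) K) = 1 :=
    A.inv_mul
  have hinj : ∀ q : MvPolynomial (Fin n) K,
      aeval (lmap ((A : Matrix (Fin n) (Fin n) K))) q = 0 → q = 0 := by
    intro q hq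
    have h2 := congrArg (aeval (lmap ((↑A⁻¹ : Matrix (Fin n) (Fin n) K)))) hq
    rwa [lmap_comp, hA1, lmap_one, aeval_X_left_apply, map_zero] at h2
  set m : MvPolynomial (Fin n) K := ∏ k, X k ^ α k with hm
  set σα : Fin n →₀ ℕ := Finsupp.equivFunOnFinite.symm α with hσα
  have hm' : m = monomial σα 1 := prod_X_pow_eq α hα
  constructor
  · rintro ⟨c, hc, hcf⟩
    have hcf' : aeval (lmap ((A : Matrix (Fin n) (Fin n) K))) m = C c * f := hcf
    have hf' : f = C c⁻¹ * aeval (lmap ((A : Matrix (Fin n) (Fin n) K))) m := by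
      rw [hcf', ← mul_assoc, ← C_mul, inv_mul_cancel₀ hc, C_1, one_mul]
    ext B
    simp only [Set.mem_setOf_eq, Set.mem_image]
    show Dop B f = 0 ↔ ∃ B', Dop B' m = 0 ∧ _ = B
    have hchain : Dop B f
        = C c⁻¹ * aeval (lmap ((A : Matrix (Fin n) (Fin n) K)))
            (Dop ((A : Matrix (Fin n) (Fin n) K) * B * (↑A⁻¹ : Matrix (Fin n) (Fin n) K)) m) := by
      rw [hf', Dop_C_mul, Dop_aeval _ _ _ (by rw [Matrix.mul_assoc ((A : Matrix (Fin n) (Fin n) K) * B), hA2, Matrix.mul_one])]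
    constructor
    · intro hB
      rw [hchain] at hB
      rcases mul_eq_zero.mp hB with h | h
      · exact absurd ((C_eq_zero (σ := Fin n)).mp h) (inv_ne_zero hc)
      · refine ⟨(A : Matrix (Fin n) (Fin n) K) * B * (↑A⁻¹ : Matrix (Fin n) (Fin n) K),
          hinj _ h, ?_⟩
        rw [Matrix.mul_assoc ((A : Matrix (Fin n) (Fin n) K)) B, Units.inv_mul_cancel_left,
          Units.inv_mul_cancel_right]
    · rintro ⟨B', hB', rfl⟩
      have hBB : (A : Matrix (Fin n) (Fin n) K)
            * ((↑A⁻¹ : Matrix (Fin n) (Fin n) K) * B' * (A : Matrix (Fin n) (Fin n) K))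
            * (↑A⁻¹ : Matrix (Fin n) (Fin n) K) = B' := by
        rw [Matrix.mul_assoc ((↑A⁻¹ : Matrix (Fin n) (Fin n) K)) B', Units.mul_inv_cancel_left,
          Units.mul_inv_cancel_right]
      rw [hchain, hBB, show Dop B' m = 0 from hB', map_zero, mul_zero]
  · intro hset
    obtain ⟨g, hg⟩ : ∃ g, g = aeval (lmap ((↑A⁻¹ : Matrix (Fin n) (Fin n) K))) f := ⟨_, rfl⟩
    have hfg : aeval (lmap ((A : Matrix (Fin n) (Fin n) K))) g = f := by
      rw [hg, lmap_comp, hA2, lmap_one, aeval_X_left_apply]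
    have hgh : g.IsHomogeneous (∑ i, α i) := by
      have h1 : ∀ i, (lmap ((↑A⁻¹ : Matrix (Fin n) (Fin n) K)) i).IsHomogeneous 1 := by
        intro i
        exact IsHomogeneous.sum _ _ _ (fun j _ => by
          rw [smul_eq_C_mul]; exact isHomogeneous_C_mul_X _ _)
      have h2 := hhom.aeval (lmap ((↑A⁻¹ : Matrix (Fin n) (Fin n) K))) h1
      rw [one_mul] at h2
      rw [hg]
      exact h2
    have hkey : ∀ β : Fin n →₀ ℕ, coeff β g ≠ 0 → ∀ i j : Fin n, α j * β i = α i * β j := by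
      intro β hβ i j
      by_cases hij : i = j
      · subst hij; rfl
      set δ : Fin n → K :=
        fun k => (if k = i then (α j : K) else 0) - (if k = j then (α i : K) else 0) with hδ
      have hδm : Dop (diagonal δ) m = 0 := by
        rw [hm', Dop_diagonal_monomial]
        have hz : (∑ k, δ k * ((σα k : ℕ) : K)) = 0 := by
          simp only [hδ, sub_mul, ite_mul, zero_mul, Finset.sum_sub_distrib,
            Finset.sum_ite_eq', Finset.mem_univ, if_true, hσα,
            Finsupp.coe_equivFunOnFinite_symm]
          ring
        rw [hz, map_zero, zero_mul]
      have hmem : ((↑A⁻¹ : Matrix (Fin n) (Fin n) K) * diagonal δ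
          * (A : Matrix (Fin n) (Fin n) K)) ∈
          {B : Matrix (Fin n) (Fin n) K | ∑ i, ∑ j, C (B i j) * (X j * pderiv i f) = 0} := by
        rw [hset]
        exact ⟨diagonal δ, hδm, rfl⟩
      have h0 : Dop ((↑A⁻¹ : Matrix (Fin n) (Fin n) K) * diagonal δ
          * (A : Matrix (Fin n) (Fin n) K)) f = 0 := hmem
      rw [← hfg, Dop_aeval _ _ (diagonal δ) (by
        rw [Matrix.mul_assoc ((↑A⁻¹ : Matrix (Fin n) (Fin n) K)) (diagonal δ),
          Units.mul_inv_cancel_left])] at h0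
      have hD : Dop (diagonal δ) g = 0 := hinj _ h0
      rw [Dop_diagonal] at hD
      have hc := congrArg (coeff β) hD
      rw [coeff_zero] at hc
      rw [show coeff β (∑ i, C (δ i) * (X i * pderiv i g))
          = (∑ k, δ k * (β k : K)) * coeff β g by
        rw [MvPolynomial.coeff_sum, Finset.sum_mul]
        exact Finset.sum_congr rfl fun k _ => by
          rw [coeff_C_mul, coeff_X_mul_pderiv]; ring] at hc
      have hsum : (∑ k, δ k * (β k : K)) = 0 :=
        (mul_eq_zero.mp hc).resolve_right hβ
      rw [hδ] at hsum
      simp only [sub_mul, ite_mul, zero_mul, Finset.sum_sub_distrib,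
        Finset.sum_ite_eq', Finset.mem_univ, if_true] at hsum
      have hK : (α j : K) * (β i : K) = (α i : K) * (β j : K) := by
        have := sub_eq_zero.mp hsum
        exact this
      exact_mod_cast hK
    have hsupp : ∀ β ∈ g.support, β = σα := by
      intro β hβ
      have hβ0 : coeff β g ≠ 0 := MvPolynomial.mem_support_iff.mp hβ
      have hdeg : ∑ k, β k = ∑ k, α k := by
        have h := hgh hβ0
        rw [Finsupp.weight_apply, Finsupp.sum_fintype] at h
        · simpa using h
        · intro k; simp
      ext k
      have h2 : (∑ j, α j) * β k = α k * ∑ j, β j := by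
        rw [Finset.sum_mul, Finset.mul_sum]
        exact Finset.sum_congr rfl fun j _ => hkey β hβ0 k j
      rw [hdeg, mul_comm] at h2
      have hd0 : 0 < ∑ j, α j :=
        Finset.sum_pos (fun j _ => hα j) ⟨k, Finset.mem_univ k⟩
      have := Nat.eq_of_mul_eq_mul_right hd0 h2
      simpa [hσα] using this
    obtain ⟨c, hcdef⟩ : ∃ c, c = coeff σα g := ⟨_, rfl⟩
    have hgm : g = monomial σα c := by
      ext β
      rw [coeff_monomial]
      split_ifs with h
      · rw [← h, hcdef]
      · by_cases hβ : coeff β g = 0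
        · exact hβ
        · exact absurd ((hsupp β (MvPolynomial.mem_support_iff.mpr hβ)).symm) h
    have hc0 : c ≠ 0 := by
      intro h0
      apply hf
      rw [← hfg, hgm, h0, map_zero, map_zero]
    refine ⟨c⁻¹, inv_ne_zero hc0, ?_⟩
    show aeval (lmap ((A : Matrix (Fin n) (Fin n) K))) m = C c⁻¹ * f
    have hfc : f = C c * aeval (lmap ((A : Matrix (Fin n) (Fin n) K))) m := by
      rw [← hfg, hgm, show (monomial σα c : MvPolynomial (Fin n) K) = C c * m by
        rw [hm', C_mul_monomial, mul_one], _root_.map_mul, aeval_C, MvPolynomial.algebraMap_eq]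
    rw [hfc, ← mul_assoc, ← C_mul, inv_mul_cancel₀ hc0, C_1, one_mul]
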